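/- Let v₁,…,v_{d+1} ∈ ℝ^d be vertices of a regular simplex such that each vertex is at distance 1 from the affine hyperplane spanned by the other d vertices, and let f_i(w) = ‖w − v_i‖^P for P > 2. If w minimizes Σ_{i≠j} α_i f_i(w) for some j and nonnegative weights α_i, then w lies in the affine hyperplane spanned by {v_i : i ≠ j}, and hence f_j(w) ≥ 1. -/

import Mathlib

theorem simplex_dropping_vertex
    (d : ℕ) (hd : 1 ≤ d) (v : Fin (d+1) → EuclideanSpace ℝ (Fin d))
    (hreg : ∀ i j k l, i ≠ j → k ≠ l → dist (v i) (v j) = dist (v k) (v l))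
    (hdist : ∀ j, Metric.infDist (v j)
        ((affineSpan ℝ (v '' {i | i ≠ j}) : AffineSubspace ℝ (EuclideanSpace ℝ (Fin d))) :
          Set (EuclideanSpace ℝ (Fin d))) = 1)
    (P : ℝ) (hP : 2 < P)
    (j : Fin (d+1)) (α : Fin (d+1) → ℝ) (hα : ∀ i, 0 ≤ α i)
    (hpos : ∃ i ∈ Finset.univ.erase j, 0 < α i)
    (w : EuclideanSpace ℝ (Fin d))
    (hw : IsMinOn (fun u => ∑ i ∈ Finset.univ.erase j, α i * ‖u - v i‖ ^ P) Set.univ w) :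
    w ∈ affineSpan ℝ (v '' {i | i ≠ j}) ∧ 1 ≤ ‖w - v j‖ ^ P := by
  set S : AffineSubspace ℝ (EuclideanSpace ℝ (Fin d)) := affineSpan ℝ (v '' {i | i ≠ j})
  have hcard : 1 < Fintype.card (Fin (d+1)) := by simp; omega
  obtain ⟨i₀, hi₀⟩ := Fintype.exists_ne_of_one_lt_card hcard j
  have hSne : (S : Set (EuclideanSpace ℝ (Fin d))).Nonempty :=
    ⟨v i₀, subset_affineSpan ℝ _ ⟨i₀, hi₀, rfl⟩⟩
  haveI : Nonempty S := hSne.to_subtype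
  have hvmem : ∀ i : Fin (d+1), i ≠ j → v i ∈ S := fun i hi =>
    subset_affineSpan ℝ _ ⟨i, hi, rfl⟩
  have hwS : w ∈ S := by
    by_contra hwS
    set w' := (EuclideanGeometry.orthogonalProjection S w : EuclideanSpace ℝ (Fin d)) with hw'
    have hd0 : 0 < dist w w' :=
      (dist_pos).2 fun h => hwS (h ▸ EuclideanGeometry.orthogonalProjection_mem w)
    -- strict decrease of each distance
    have key : ∀ i : Fin (d+1), i ≠ j → dist (v i) w' < dist (v i) w := by
      intro i hi
      have hpy := EuclideanGeometry.dist_sq_eq_dist_orthogonalProjection_sq_add_dist_orthogonalProjection_sq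
        w (hvmem i hi)
      nlinarith [dist_nonneg (x := v i) (y := w'), dist_nonneg (x := v i) (y := w),
        sq_nonneg (dist w w')]
    have hstrict : (∑ i ∈ Finset.univ.erase j, α i * ‖w' - v i‖ ^ P)
        < ∑ i ∈ Finset.univ.erase j, α i * ‖w - v i‖ ^ P := by
      obtain ⟨i₁, hi₁mem, hi₁pos⟩ := hpos
      have hi₁ : i₁ ≠ j := Finset.ne_of_mem_erase hi₁mem
      have hPpos : 0 < P := by linarith
      refine Finset.sum_lt_sum (fun i hi => ?_) ⟨i₁, hi₁mem, ?_⟩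
      · have hii : i ≠ j := Finset.ne_of_mem_erase hi
        have : ‖w' - v i‖ ^ P ≤ ‖w - v i‖ ^ P := by
          apply Real.rpow_le_rpow (norm_nonneg _) _ (le_of_lt hPpos)
          rw [← dist_eq_norm, ← dist_eq_norm, dist_comm w' (v i), dist_comm w (v i)]
          exact le_of_lt (key i hii)
        exact mul_le_mul_of_nonneg_left this (hα i)
      · have : ‖w' - v i₁‖ ^ P < ‖w - v i₁‖ ^ P := by
          apply Real.rpow_lt_rpow (norm_nonneg _) _ hPpos
          rw [← dist_eq_norm, ← dist_eq_norm, dist_comm w' (v i₁), dist_comm w (v i₁)]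
          exact key i₁ hi₁
        exact mul_lt_mul_of_pos_left this hi₁pos
    exact absurd (hw (Set.mem_univ w')) (not_le.2 hstrict)
  refine ⟨hwS, ?_⟩
  have h1 : (1 : ℝ) ≤ ‖w - v j‖ := by
    have := hdist j
    have hle : Metric.infDist (v j) (S : Set (EuclideanSpace ℝ (Fin d))) ≤ dist (v j) w :=
      Metric.infDist_le_dist_of_mem hwS
    rw [this] at hle
    rwa [dist_comm, dist_eq_norm] at hle
  calc (1 : ℝ) = 1 ^ P := (Real.one_rpow P).symm
    _ ≤ ‖w - v j‖ ^ P := Real.rpow_le_rpow (by norm_num) h1 (by linarith)
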